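/- Let u : [0,∞) → ℝ^N be continuously differentiable and satisfy the LCA dynamics τ·u̇(t) = −u(t) − (ΦᵀΦ − I)·T_λ(u(t)) + Φᵀy for all t ≥ 0, where τ > 0 and T_λ is the soft-thresholding function. Then the BPDN objective is non-increasing along the trajectory: the function t ↦ V(T_λ(u(t))) is antitone on [0,∞). -/

import Mathlib

open Matrix

/-- The soft-thresholding function `T_λ`. -/
noncomputable def softThresh (lam u : ℝ) : ℝ :=
  if |u| ≤ lam then 0 else u - lam * Real.sign u

/-- The BPDN objective `V(a) = (1/2)‖y − Φa‖₂² + λ‖a‖₁`. -/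
noncomputable def bpdn {M N : ℕ} (Φ : Matrix (Fin M) (Fin N) ℝ)
    (y : Fin M → ℝ) (lam : ℝ) (a : Fin N → ℝ) : ℝ :=
  (1 / 2) * ∑ m, (y m - (Φ *ᵥ a) m) ^ 2 + lam * ∑ n, |a n|

/-- Clamp representation of soft thresholding. -/
lemma softThresh_eq (lam : ℝ) (hlam : 0 < lam) (v : ℝ) :
    softThresh lam v = v - min (max v (-lam)) lam := by
  unfold softThresh
  rcases le_or_gt (|v|) lam with h | h
  · rw [if_pos h]
    rw [abs_le] at h
    rw [max_eq_left h.1, min_eq_left h.2, sub_self]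
  · rw [if_neg (not_le.2 h)]
    rcases lt_abs.mp h with h' | h'
    · rw [Real.sign_of_pos (hlam.trans h'), mul_one,
        max_eq_left (by linarith), min_eq_right (le_of_lt h')]
    · have hv : v < 0 := by linarith
      rw [Real.sign_of_neg hv, mul_neg_one, sub_neg_eq_add,
        max_eq_right (by linarith), min_eq_left (by linarith)]
      ring

lemma clamp_mono_lip {lam v w : ℝ} (hvw : v ≤ w) :
    min (max v (-lam)) lam ≤ min (max w (-lam)) lam ∧
    min (max w (-lam)) lam - min (max v (-lam)) lam ≤ w - v := by
  constructor
  · exact min_le_min (max_le_max hvw le_rfl) le_rfl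
  · simp only [min_def, max_def]
    split_ifs <;> linarith

lemma softThresh_mono (lam : ℝ) (hlam : 0 < lam) {v w : ℝ} (hvw : v ≤ w) :
    softThresh lam v ≤ softThresh lam w ∧
    softThresh lam w - softThresh lam v ≤ w - v := by
  rw [softThresh_eq lam hlam, softThresh_eq lam hlam]
  obtain ⟨h1, h2⟩ := clamp_mono_lip (lam := lam) hvw
  constructor <;> linarith

lemma softThresh_lip (lam : ℝ) (hlam : 0 < lam) (x y : ℝ) :
    |softThresh lam x - softThresh lam y| ≤ |x - y| := by
  rcases le_total x y with h | h
  · obtain ⟨h1, h2⟩ := softThresh_mono lam hlam h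
    rw [abs_of_nonpos (by linarith), abs_of_nonpos (by linarith)]
    linarith
  · obtain ⟨h1, h2⟩ := softThresh_mono lam hlam h
    rw [abs_of_nonneg (by linarith), abs_of_nonneg (by linarith)]
    linarith

/-- Scalar subgradient inequality for `λ|·|` at the soft threshold point. -/
lemma l1_subgrad {lam : ℝ} (hlam : 0 < lam) (v z : ℝ) :
    lam * |softThresh lam v| + (v - softThresh lam v) * (z - softThresh lam v)
      ≤ lam * |z| := by
  unfold softThresh
  rcases le_or_gt (|v|) lam with h | h
  · rw [if_pos h]
    have h1 : v * z ≤ |v| * |z| := le_trans (le_abs_self _) (by rw [abs_mul])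
    have h2 : |v| * |z| ≤ lam * |z| := mul_le_mul_of_nonneg_right h (abs_nonneg _)
    simp only [abs_zero, mul_zero, sub_zero]
    linarith
  · rw [if_neg (not_le.2 h)]
    rcases lt_abs.mp h with h' | h'
    · rw [Real.sign_of_pos (hlam.trans h'), mul_one]
      rw [abs_of_nonneg (by linarith : (0:ℝ) ≤ v - lam)]
      have := le_abs_self z
      nlinarith
    · have hv : v < 0 := by linarith
      rw [Real.sign_of_neg hv, mul_neg_one, sub_neg_eq_add]
      rw [abs_of_nonpos (by linarith : v + lam ≤ 0)]
      have := neg_abs_le z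
      nlinarith

/-- Convexity (first-order) inequality for the quadratic part. -/
lemma quad_subgrad {M N : ℕ} (Φ : Matrix (Fin M) (Fin N) ℝ) (y : Fin M → ℝ)
    (a z : Fin N → ℝ) :
    (1/2) * ∑ m, (y m - (Φ *ᵥ a) m)^2
      + ∑ n, ((Φᵀ *ᵥ (Φ *ᵥ a) - Φᵀ *ᵥ y) n) * (z n - a n)
      ≤ (1/2) * ∑ m, (y m - (Φ *ᵥ z) m)^2 := by
  have key : ∑ n, ((Φᵀ *ᵥ (Φ *ᵥ a) - Φᵀ *ᵥ y) n) * (z n - a n)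
      = ∑ m, ((Φ *ᵥ a) m - y m) * ((Φ *ᵥ z) m - (Φ *ᵥ a) m) := by
    have h1 : ∑ n, ((Φᵀ *ᵥ (Φ *ᵥ a) - Φᵀ *ᵥ y) n) * (z n - a n)
        = (Φᵀ *ᵥ (Φ *ᵥ a - y)) ⬝ᵥ (z - a) := by
      simp [Matrix.mulVec_sub, dotProduct, Pi.sub_apply]
    rw [h1, Matrix.mulVec_transpose, ← dotProduct_mulVec,
      Matrix.mulVec_sub]
    simp [dotProduct, Pi.sub_apply]
  rw [key, Finset.mul_sum, Finset.mul_sum, ← Finset.sum_add_distrib]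
  refine Finset.sum_le_sum fun m _ => ?_
  nlinarith [sq_nonneg ((Φ *ᵥ a) m - (Φ *ᵥ z) m)]

/-- Subgradient inequality for the BPDN objective at a soft-thresholded point:
`-(∇f(T u) + (u - T u))` is a descent certificate. -/
lemma bpdn_subgrad {M N : ℕ} (Φ : Matrix (Fin M) (Fin N) ℝ) (y : Fin M → ℝ)
    {lam : ℝ} (hlam : 0 < lam) (v z : Fin N → ℝ) :
    bpdn Φ y lam (fun n => softThresh lam (v n))
      + ∑ n, ((Φᵀ *ᵥ (Φ *ᵥ fun n => softThresh lam (v n)) - Φᵀ *ᵥ y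
          + (v - fun n => softThresh lam (v n))) n) * (z n - softThresh lam (v n))
      ≤ bpdn Φ y lam z := by
  set a : Fin N → ℝ := fun n => softThresh lam (v n) with ha
  have hsplit : ∑ n, ((Φᵀ *ᵥ (Φ *ᵥ a) - Φᵀ *ᵥ y + (v - a)) n) * (z n - a n)
      = ∑ n, ((Φᵀ *ᵥ (Φ *ᵥ a) - Φᵀ *ᵥ y) n) * (z n - a n)
        + ∑ n, (v n - a n) * (z n - a n) := by
    rw [← Finset.sum_add_distrib]
    refine Finset.sum_congr rfl fun n _ => ?_
    simp [Pi.add_apply, Pi.sub_apply]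
    ring
  have hl1 : lam * ∑ n, |a n| + ∑ n, (v n - a n) * (z n - a n) ≤ lam * ∑ n, |z n| := by
    rw [Finset.mul_sum, Finset.mul_sum, ← Finset.sum_add_distrib]
    exact Finset.sum_le_sum fun n _ => l1_subgrad hlam (v n) (z n)
  have hq := quad_subgrad Φ y a z
  unfold bpdn
  rw [hsplit]
  linarith

/-- along any continuously differentiable solution of the
soft-thresholding LCA dynamics on `[0,∞)`, the BPDN objective
`t ↦ V(T_λ(u(t)))` is non-increasing (antitone) on `[0,∞)`. -/
theorem stmt16 {M N : ℕ} (hM : 0 < M) (hN : 0 < N)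
    (Φ : Matrix (Fin M) (Fin N) ℝ) (y : Fin M → ℝ)
    (lam : ℝ) (hlam : 0 < lam) (τ : ℝ) (hτ : 0 < τ)
    (u u' : ℝ → Fin N → ℝ)
    (hderiv : ∀ t : ℝ, 0 ≤ t → HasDerivWithinAt u (u' t) (Set.Ici 0) t)
    (hcont : ContinuousOn u' (Set.Ici 0))
    (hdyn : ∀ t : ℝ, 0 ≤ t →
      τ • u' t =
        -(u t) - (Φᵀ * Φ - 1) *ᵥ (fun n => softThresh lam (u t n)) + Φᵀ *ᵥ y) :
    AntitoneOn (fun t => bpdn Φ y lam (fun n => softThresh lam (u t n)))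
      (Set.Ici 0) := by
  set g : ℝ → ℝ := fun t => bpdn Φ y lam (fun n => softThresh lam (u t n)) with hgdef
  -- continuity of g on [0, ∞)
  have hstc : Continuous (fun x : ℝ => softThresh lam x) := by
    have h : (fun x : ℝ => softThresh lam x) = fun x => x - min (max x (-lam)) lam :=
      funext (softThresh_eq lam hlam)
    rw [h]; fun_prop
  have hucont : ContinuousOn u (Set.Ici 0) := fun t ht =>
    (hderiv t ht).continuousWithinAt
  have hacont : ContinuousOn (fun t => (fun n => softThresh lam (u t n))) (Set.Ici 0) := by
    apply continuousOn_pi.2; intro n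
    exact hstc.comp_continuousOn ((continuous_apply n).comp_continuousOn hucont)
  have hbpdnc : Continuous (bpdn Φ y lam) := by
    unfold bpdn Matrix.mulVec dotProduct
    fun_prop
  have hgc : ContinuousOn g (Set.Ici 0) := hbpdnc.comp_continuousOn hacont
  have hN' : (0:ℝ) < N := by exact_mod_cast hN
  -- key right-slope estimate
  have key : ∀ t ∈ Set.Ici (0:ℝ), ∀ r : ℝ, 0 < r →
      ∀ᶠ s in nhdsWithin t (Set.Ioi t), g s - g t ≤ r / 2 * (s - t) := by
    intro t ht r hr
    set ε : ℝ := r / (2 * τ * N) with hε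
    have hεpos : 0 < ε := by positivity
    set C : Fin N → ℝ := fun n => |u' t n| + 1 with hC
    have hCpos : ∀ n, 0 < C n := fun n => by positivity
    have hle : (nhdsWithin t (Set.Ioi t)) ≤ nhdsWithin t (Set.Ici 0 \ {t}) :=
      nhdsWithin_mono t (fun s hs => ⟨Set.mem_Ici.2 (le_trans ht (le_of_lt hs)), ne_of_gt hs⟩)
    have hle2 : (nhdsWithin t (Set.Ioi t)) ≤ nhdsWithin t (Set.Ici 0) :=
      nhdsWithin_mono t (fun s hs => Set.mem_Ici.2 (le_trans ht (le_of_lt hs)))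
    have hslope : ∀ n, Filter.Tendsto (slope (fun s => u s n) t)
        (nhdsWithin t (Set.Ioi t)) (nhds (u' t n)) := by
      intro n
      have h1 : HasDerivWithinAt (fun s => u s n) (u' t n) (Set.Ici 0) t :=
        (hasDerivWithinAt_pi.1 (hderiv t ht)) n
      exact (hasDerivWithinAt_iff_tendsto_slope.1 h1).mono_left hle
    have hE1 : ∀ᶠ s in nhdsWithin t (Set.Ioi t), ∀ n, |u s n - u t n| ≤ C n * (s - t) := by
      rw [Filter.eventually_all]
      intro n
      have h2 : ∀ᶠ s in nhdsWithin t (Set.Ioi t),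
          slope (fun s' => u s' n) t s ∈ Metric.ball (u' t n) 1 :=
        hslope n (Metric.ball_mem_nhds _ one_pos)
      filter_upwards [h2, self_mem_nhdsWithin] with s hs hmem
      have hst : (0:ℝ) < s - t := sub_pos.2 hmem
      rw [Metric.mem_ball, Real.dist_eq] at hs
      have h3 := abs_sub_abs_le_abs_sub (slope (fun s' => u s' n) t s) (u' t n)
      have h4 : |slope (fun s' => u s' n) t s| ≤ C n := by
        simp only [hC]; linarith
      simp only [slope_def_field] at h4
      rw [abs_div, abs_of_pos hst] at h4
      exact (div_le_iff₀ hst).1 h4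
    have hE2 : ∀ᶠ s in nhdsWithin t (Set.Ioi t), ∀ n, |u' s n - u' t n| ≤ ε / C n := by
      rw [Filter.eventually_all]
      intro n
      have htend : Filter.Tendsto (fun s => u' s n) (nhdsWithin t (Set.Ioi t))
          (nhds (u' t n)) :=
        (((continuous_apply n).continuousAt.tendsto).comp (hcont t ht)).mono_left hle2
      have hball := htend (Metric.ball_mem_nhds _ (div_pos hεpos (hCpos n)))
      filter_upwards [hball] with s hs
      rw [Set.mem_preimage, Metric.mem_ball, Real.dist_eq] at hs
      exact hs.le
    have hE3 : ∀ᶠ s in nhdsWithin t (Set.Ioi t), ∀ n,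
        0 ≤ u' t n * (softThresh lam (u s n) - softThresh lam (u t n)) := by
      rw [Filter.eventually_all]
      intro n
      rcases lt_trichotomy (u' t n) 0 with hn | hn | hn
      · have h2 : ∀ᶠ s in nhdsWithin t (Set.Ioi t),
            slope (fun s' => u s' n) t s < 0 :=
          (hslope n).eventually (eventually_lt_nhds hn)
        filter_upwards [h2, self_mem_nhdsWithin] with s hs hmem
        have hst : (0:ℝ) < s - t := sub_pos.2 hmem
        rw [slope_def_field, div_neg_iff] at hs
        have hus : u s n ≤ u t n := by
          rcases hs with ⟨_, h⟩ | ⟨h, _⟩ <;> linarith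
        have hmon := softThresh_mono lam hlam hus
        have hsd : softThresh lam (u s n) - softThresh lam (u t n) ≤ 0 := by
          linarith [hmon.1]
        nlinarith
      · filter_upwards with s; rw [hn]; simp
      · have h2 : ∀ᶠ s in nhdsWithin t (Set.Ioi t),
            0 < slope (fun s' => u s' n) t s :=
          (hslope n).eventually (eventually_gt_nhds hn)
        filter_upwards [h2, self_mem_nhdsWithin] with s hs hmem
        have hst : (0:ℝ) < s - t := sub_pos.2 hmem
        rw [slope_def_field, div_pos_iff] at hs
        have hus : u t n ≤ u s n := by
          rcases hs with ⟨h, _⟩ | ⟨_, h⟩ <;> linarith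
        have := softThresh_mono lam hlam hus
        exact mul_nonneg hn.le (by linarith [this.1])
    filter_upwards [hE1, hE2, hE3, self_mem_nhdsWithin] with s h1 h2 h3 hmem
    have hst : t < s := hmem
    have hstp : (0:ℝ) < s - t := sub_pos.2 hst
    have hs0 : (0:ℝ) ≤ s := le_trans ht hst.le
    have hsub := bpdn_subgrad Φ y hlam (u s) (fun n => softThresh lam (u t n))
    have hp : ((Φᵀ *ᵥ (Φ *ᵥ fun n => softThresh lam (u s n)) - Φᵀ *ᵥ y
        + (u s - fun n => softThresh lam (u s n)))) = -(τ • u' s) := by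
      rw [hdyn s hs0, Matrix.sub_mulVec, Matrix.one_mulVec, ← Matrix.mulVec_mulVec]
      abel
    rw [hp] at hsub
    simp only [Pi.neg_apply, Pi.smul_apply, smul_eq_mul] at hsub
    have hterm : ∀ n : Fin N, -(τ * ε * (s - t)) ≤
        -(τ * u' s n) * (softThresh lam (u t n) - softThresh lam (u s n)) := by
      intro n
      have hΔ : |softThresh lam (u s n) - softThresh lam (u t n)| ≤ C n * (s - t) :=
        le_trans (softThresh_lip lam hlam _ _) (h1 n)
      have hδ := h2 n
      have hsg := h3 n
      have habs : |(u' s n - u' t n) * (softThresh lam (u s n) - softThresh lam (u t n))|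
          ≤ ε * (s - t) := by
        rw [abs_mul]
        calc |u' s n - u' t n| * |softThresh lam (u s n) - softThresh lam (u t n)|
            ≤ (ε / C n) * (C n * (s - t)) :=
              mul_le_mul hδ hΔ (abs_nonneg _) (div_pos hεpos (hCpos n)).le
          _ = ε * (s - t) := by field_simp [(hCpos n).ne']
      have h5 : -(ε * (s - t)) ≤
          (u' s n - u' t n) * (softThresh lam (u s n) - softThresh lam (u t n)) := by
        have := neg_abs_le ((u' s n - u' t n) *
          (softThresh lam (u s n) - softThresh lam (u t n)))
        linarith
      have heq : -(τ * u' s n) * (softThresh lam (u t n) - softThresh lam (u s n))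
          = τ * (u' t n * (softThresh lam (u s n) - softThresh lam (u t n)))
            + τ * ((u' s n - u' t n) * (softThresh lam (u s n) - softThresh lam (u t n))) := by
        ring
      rw [heq]
      have t1 : 0 ≤ τ * (u' t n * (softThresh lam (u s n) - softThresh lam (u t n))) :=
        mul_nonneg hτ.le hsg
      have t2 : τ * (-(ε * (s - t))) ≤
          τ * ((u' s n - u' t n) * (softThresh lam (u s n) - softThresh lam (u t n))) :=
        mul_le_mul_of_nonneg_left h5 hτ.le
      nlinarith
    have hsumb : -(↑N * (τ * ε * (s - t))) ≤
        ∑ n, -(τ * u' s n) * (softThresh lam (u t n) - softThresh lam (u s n)) := by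
      have := Finset.sum_le_sum (fun n (_ : n ∈ Finset.univ) => hterm n)
      simpa [Finset.sum_const, Finset.card_univ, mul_comm] using this
    have hconst : (N:ℝ) * (τ * ε * (s - t)) = r / 2 * (s - t) := by
      rw [hε]; field_simp
    have hgs : g s = bpdn Φ y lam (fun n => softThresh lam (u s n)) := rfl
    have hgt : g t = bpdn Φ y lam (fun n => softThresh lam (u t n)) := rfl
    rw [hgs, hgt]
    linarith [hsub, hsumb, hconst]
  -- conclude antitone via the fencing lemma
  intro t1 h1 t2 h2 h12
  show g t2 ≤ g t1
  have hf : ContinuousOn g (Set.Icc t1 t2) :=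
    hgc.mono (fun x hx => le_trans h1 hx.1)
  have hbound : ∀ x ∈ Set.Ico t1 t2, ∀ r, (0:ℝ) < r →
      ∃ᶠ z in nhdsWithin x (Set.Ioi x), slope g x z < r := by
    intro x hx r hr
    have hx0 : x ∈ Set.Ici (0:ℝ) := le_trans h1 hx.1
    have hev := key x hx0 r hr
    have hev2 : ∀ᶠ z in nhdsWithin x (Set.Ioi x), slope g x z < r := by
      filter_upwards [hev, self_mem_nhdsWithin] with z hz hmem
      have hzx : (0:ℝ) < z - x := sub_pos.2 hmem
      rw [slope_def_field, div_lt_iff₀ hzx]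
      nlinarith [mul_pos (half_pos hr) hzx]
    exact hev2.frequently
  exact image_le_of_liminf_slope_right_le_deriv_boundary (f := g) (B := fun _ => g t1)
    (B' := fun _ => 0) hf le_rfl continuousOn_const
    (fun x _ => hasDerivWithinAt_const x _ _) hbound (Set.right_mem_Icc.2 h12)
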